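/- Let N, T, V, n, q be positive integers and p : Fin N → Fin N → ℝ with p i j ≥ 0 and ∑_j p i j = 1 for every i. Let S be an n×n positive definite real matrix and R a q×q positive definite real matrix. For i ∈ Fin N, h ∈ Fin T, υ ∈ Fin V let A i h be n×n, B i h be n×q, K i υ and C i υ be q×n, 𝒜 i υ be n×n real matrices, and let Ψ i υ be a 2n×2n positive definite block-diagonal matrix diag(Ψxx i υ, Ψηη i υ) with n×n positive definite blocks. Define the 2n×2n matrix Ξ i h υ as the block matrix [A i h + (B i h)·(K i υ) , (B i h)·(C i υ) ; 0 , 𝒜 i υ], the q×2n matrix Λ i υ = [K i υ , C i υ], and the n×2n matrix E = [I , 0]. Assume that for all i ∈ Fin N, h ∈ Fin T, υ, ω ∈ Fin V the matrix (Ξ i h υ)ᵀ·(∑_j p i j · Ψ j ω)·(Ξ i h υ) − Ψ i υ + Eᵀ·S·E + (Λ i υ)ᵀ·R·(Λ i υ) is negative definite. Then for every i ∈ Fin N and all convex weights θ on Fin T and ϑ, μ on Fin V, setting Ξ̄ = ∑_h ∑_υ (θ h · ϑ υ)·(Ξ i h υ), Λ̄ = ∑_υ ϑ υ · (Λ i υ),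 Ψ̄ᵢ = ∑_υ ϑ υ · (Ψ i υ) and Q̄ = ∑_j p i j · (∑_ω μ ω · (Ψ j ω)), the matrix Ξ̄ᵀ·Q̄·Ξ̄ − Ψ̄ᵢ + Eᵀ·S·E + Λ̄ᵀ·R·Λ̄ is negative definite. -/

import Mathlib

set_option linter.unusedSectionVars false
set_option maxHeartbeats 1000000

open Matrix

/-- Augmented closed-loop matrix `Ξ = [A + BK, BC; 0, 𝒜]` of the
dynamic-prediction-optimized fuzzy Markov jump system. -/
noncomputable def XiBlk {n q : ℕ} (A : Matrix (Fin n) (Fin n) ℝ)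
    (B : Matrix (Fin n) (Fin q) ℝ) (K C : Matrix (Fin q) (Fin n) ℝ)
    (Acal : Matrix (Fin n) (Fin n) ℝ) :
    Matrix (Fin n ⊕ Fin n) (Fin n ⊕ Fin n) ℝ :=
  Matrix.fromBlocks (A + B * K) (B * C) 0 Acal

/-- The row-block matrix `Λ = [K, C]`. -/
noncomputable def LamBlk {n q : ℕ} (K C : Matrix (Fin q) (Fin n) ℝ) :
    Matrix (Fin q) (Fin n ⊕ Fin n) ℝ :=
  Matrix.fromCols K C

/-- The projection `E = [I, 0]` onto the first block of coordinates. -/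
noncomputable def EBlk (n : ℕ) : Matrix (Fin n) (Fin n ⊕ Fin n) ℝ :=
  Matrix.fromCols 1 0

/-- Block-diagonal matrix `Ψ = diag(Ψxx, Ψηη)`. -/
noncomputable def PsiBlk {n : ℕ} (Pxx Pee : Matrix (Fin n) (Fin n) ℝ) :
    Matrix (Fin n ⊕ Fin n) (Fin n ⊕ Fin n) ℝ :=
  Matrix.fromBlocks Pxx 0 0 Pee

section Helpers
variable {m' : Type*} [Fintype m']

lemma mySum_mulVec {ι : Type*} (s : Finset ι) {k' : Type*} [Fintype k']
    (M : ι → Matrix m' k' ℝ) (x : k' → ℝ) :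
    (∑ k ∈ s, M k) *ᵥ x = ∑ k ∈ s, M k *ᵥ x := by
  classical
  induction s using Finset.induction_on with
  | empty => simp
  | insert _ _ h ih => rw [Finset.sum_insert h, Finset.sum_insert h, Matrix.add_mulVec, ih]

lemma myMulVec_sum {ι : Type*} (s : Finset ι) (M : Matrix m' m' ℝ) (v : ι → m' → ℝ) :
    M *ᵥ (∑ k ∈ s, v k) = ∑ k ∈ s, M *ᵥ v k := by
  classical
  induction s using Finset.induction_on with
  | empty => simp
  | insert _ _ h ih => rw [Finset.sum_insert h, Finset.sum_insert h, Matrix.mulVec_add, ih]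

lemma mySum_dotProduct {ι : Type*} (s : Finset ι) (v : ι → m' → ℝ) (y : m' → ℝ) :
    (∑ k ∈ s, v k) ⬝ᵥ y = ∑ k ∈ s, v k ⬝ᵥ y := by
  classical
  induction s using Finset.induction_on with
  | empty => simp
  | insert _ _ h ih => rw [Finset.sum_insert h, Finset.sum_insert h, add_dotProduct, ih]

lemma myDotProduct_sum {ι : Type*} (s : Finset ι) (y : m' → ℝ) (v : ι → m' → ℝ) :
    y ⬝ᵥ (∑ k ∈ s, v k) = ∑ k ∈ s, y ⬝ᵥ v k := by
  classical
  induction s using Finset.induction_on with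
  | empty => simp
  | insert _ _ h ih => rw [Finset.sum_insert h, Finset.sum_insert h, dotProduct_add, ih]

lemma myPsd_qf {M : Matrix m' m' ℝ} (hM : M.PosSemidef) (x : m' → ℝ) :
    0 ≤ x ⬝ᵥ M *ᵥ x := by simpa using hM.dotProduct_mulVec_nonneg x

lemma myPd_qf {M : Matrix m' m' ℝ} (hM : M.PosDef) {x : m' → ℝ} (hx : x ≠ 0) :
    0 < x ⬝ᵥ M *ᵥ x := by simpa using hM.dotProduct_mulVec_pos hx

lemma myPsd_smul {c : ℝ} (hc : 0 ≤ c) {M : Matrix m' m' ℝ} (hM : M.PosSemidef) :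
    (c • M).PosSemidef := by
  refine Matrix.PosSemidef.of_dotProduct_mulVec_nonneg ?_ ?_
  · show (c • M)ᴴ = c • M
    rw [Matrix.conjTranspose_smul, hM.1]
    simp
  · intro x
    rw [Matrix.smul_mulVec, dotProduct_smul, smul_eq_mul]
    exact mul_nonneg hc (hM.dotProduct_mulVec_nonneg x)

lemma myPsd_sum {ι : Type*} (s : Finset ι) (f : ι → Matrix m' m' ℝ)
    (h : ∀ k ∈ s, (f k).PosSemidef) : (∑ k ∈ s, f k).PosSemidef := by
  classical
  induction s using Finset.induction_on with
  | empty => simpa using Matrix.PosSemidef.zero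
  | insert _ _ hks ih =>
      rw [Finset.sum_insert hks]
      exact ((h _ (Finset.mem_insert_self _ _)).add
        (ih fun k hk => h k (Finset.mem_insert_of_mem hk)))

lemma myQf_transpose_mul_mul {k' : Type*} [Fintype k'] (B : Matrix k' m' ℝ)
    (Q : Matrix k' k' ℝ) (x : m' → ℝ) :
    x ⬝ᵥ (Bᵀ * Q * B) *ᵥ x = (B *ᵥ x) ⬝ᵥ Q *ᵥ (B *ᵥ x) := by
  rw [← Matrix.mulVec_mulVec, Matrix.dotProduct_mulVec, ← Matrix.vecMul_vecMul,
    Matrix.vecMul_transpose, ← Matrix.dotProduct_mulVec]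

lemma myQf_symm {Q : Matrix m' m' ℝ} (hQ : Qᵀ = Q) (u v : m' → ℝ) :
    u ⬝ᵥ Q *ᵥ v = v ⬝ᵥ Q *ᵥ u := by
  rw [Matrix.dotProduct_mulVec, ← Matrix.mulVec_transpose, hQ, dotProduct_comm]

lemma myConvex_qf {ι : Type*} [Fintype ι] {Q : Matrix m' m' ℝ} (hQ : Q.PosSemidef)
    (w : ι → ℝ) (hw : ∀ k, 0 ≤ w k) (hw1 : ∑ k, w k = 1) (u : ι → m' → ℝ) :
    (∑ k, w k • u k) ⬝ᵥ Q *ᵥ (∑ k, w k • u k) ≤ ∑ k, w k * (u k ⬝ᵥ Q *ᵥ u k) := by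
  have hQt : Qᵀ = Q := by
    rw [← Matrix.conjTranspose_eq_transpose_of_trivial]; exact hQ.1
  set B : ι → ι → ℝ := fun k l => u k ⬝ᵥ Q *ᵥ u l with hB
  have hsymm : ∀ k l, B k l = B l k := fun k l => myQf_symm hQt _ _
  have key : ∀ k l, B k l ≤ (B k k + B l l) / 2 := by
    intro k l
    have h0 := myPsd_qf hQ (u k - u l)
    rw [Matrix.mulVec_sub, dotProduct_sub, sub_dotProduct,
      sub_dotProduct] at h0
    have hs := hsymm k l
    simp only [hB] at h0 hs ⊢
    linarith
  have hexp : (∑ k, w k • u k) ⬝ᵥ Q *ᵥ (∑ k, w k • u k)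
      = ∑ k, ∑ l, (w k * w l) * B k l := by
    rw [myMulVec_sum, mySum_dotProduct]
    refine Finset.sum_congr rfl fun k _ => ?_
    rw [myDotProduct_sum]
    simp only [Matrix.mulVec_smul, smul_dotProduct, dotProduct_smul, smul_eq_mul]
    exact Finset.sum_congr rfl fun l _ => by ring
  rw [hexp]
  have step1 : ∑ k, ∑ l, (w k * w l) * B k l
      ≤ ∑ k, ∑ l, (w k * w l) * ((B k k + B l l) / 2) := by
    refine Finset.sum_le_sum fun k _ => Finset.sum_le_sum fun l _ => ?_
    exact mul_le_mul_of_nonneg_left (key k l) (mul_nonneg (hw k) (hw l))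
  refine step1.trans_eq ?_
  have h1 : ∀ k, ∑ l, (w k * w l) * ((B k k + B l l) / 2)
      = w k * B k k / 2 + w k * (∑ l, w l * B l l) / 2 := by
    intro k
    have hterm : ∀ l, (w k * w l) * ((B k k + B l l) / 2)
        = (w k * B k k / 2) * w l + (w l * B l l) * (w k / 2) := fun l => by ring
    simp_rw [hterm]
    rw [Finset.sum_add_distrib, ← Finset.mul_sum, hw1, ← Finset.sum_mul]
    ring
  simp_rw [h1]
  rw [Finset.sum_add_distrib, ← Finset.sum_div]
  have h2 : ∑ k, w k * (∑ l, w l * B l l) / 2 = (∑ l, w l * B l l) / 2 := by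
    rw [← Finset.sum_div, ← Finset.sum_mul, hw1, one_mul]
  rw [h2]
  ring

lemma myNeg_combo {ι : Type*} [Fintype ι] (w g : ι → ℝ) (hw : ∀ k, 0 ≤ w k)
    (hw1 : ∑ k, w k = 1) (hg : ∀ k, g k < 0) : ∑ k, w k * g k < 0 := by
  have hne : ∑ k, w k ≠ 0 := by rw [hw1]; norm_num
  obtain ⟨k0, _, hk0⟩ := Finset.exists_ne_zero_of_sum_ne_zero hne
  have hlt : ∑ k, w k * g k < ∑ k : ι, (0 : ℝ) := by
    refine Finset.sum_lt_sum (fun k _ => ?_) ⟨k0, Finset.mem_univ _, ?_⟩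
    · have := mul_le_mul_of_nonneg_left (hg k).le (hw k)
      simpa using this
    · exact mul_neg_of_pos_of_neg (lt_of_le_of_ne (hw k0) (Ne.symm hk0)) (hg k0)
  simpa using hlt

lemma myWeight_prod_sum {α β : Type*} [Fintype α] [Fintype β] (w1 : α → ℝ) (w2 : β → ℝ)
    (h1 : ∑ a, w1 a = 1) (h2 : ∑ b, w2 b = 1) : ∑ k : α × β, w1 k.1 * w2 k.2 = 1 := by
  rw [Fintype.sum_prod_type]
  have h : ∀ a, ∑ b, w1 a * w2 b = w1 a := fun a => by rw [← Finset.mul_sum, h2, mul_one]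
  simp_rw [h]
  exact h1

lemma myProd_expand {α β : Type*} [Fintype α] [Fintype β] (w1 : α → ℝ) (w2 : β → ℝ)
    (f : α → β → ℝ) :
    ∑ a, w1 a * (∑ b, w2 b * f a b) = ∑ k : α × β, (w1 k.1 * w2 k.2) * f k.1 k.2 := by
  rw [Fintype.sum_prod_type]
  refine Finset.sum_congr rfl fun a _ => ?_
  rw [Finset.mul_sum]
  exact Finset.sum_congr rfl fun b _ => by ring

lemma myCollapse_fst {α β : Type*} [Fintype α] [Fintype β] (w1 : α → ℝ) (w2 : β → ℝ)
    (h2 : ∑ b, w2 b = 1) (f : α → ℝ) :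
    ∑ k : α × β, (w1 k.1 * w2 k.2) * f k.1 = ∑ a, w1 a * f a := by
  rw [Fintype.sum_prod_type]
  refine Finset.sum_congr rfl fun a _ => ?_
  have h : ∀ b, (w1 a * w2 b) * f a = (w1 a * f a) * w2 b := fun b => by ring
  simp_rw [h]
  rw [← Finset.mul_sum, h2, mul_one]

lemma myCollapse_snd {α β : Type*} [Fintype α] [Fintype β] (w1 : α → ℝ) (w2 : β → ℝ)
    (h1 : ∑ a, w1 a = 1) (f : β → ℝ) :
    ∑ k : α × β, (w1 k.1 * w2 k.2) * f k.2 = ∑ b, w2 b * f b := by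
  rw [Fintype.sum_prod_type]
  have h : ∀ a, ∑ b, (w1 a * w2 b) * f b = w1 a * (∑ b, w2 b * f b) := by
    intro a
    rw [Finset.mul_sum]
    exact Finset.sum_congr rfl fun b _ => by ring
  simp_rw [h]
  rw [← Finset.sum_mul, h1, one_mul]

lemma myWeight_const {ι : Type*} [Fintype ι] (w : ι → ℝ) (hw1 : ∑ k, w k = 1) (c : ℝ) :
    ∑ k, w k * c = c := by rw [← Finset.sum_mul, hw1, one_mul]

end Helpers

lemma myPsi_psd {n : ℕ} {Pxx Pee : Matrix (Fin n) (Fin n) ℝ}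
    (hx : Pxx.PosDef) (he : Pee.PosDef) : (PsiBlk Pxx Pee).PosSemidef := by
  refine Matrix.PosSemidef.of_dotProduct_mulVec_nonneg ?_ ?_
  · show (PsiBlk Pxx Pee)ᴴ = PsiBlk Pxx Pee
    rw [PsiBlk, Matrix.fromBlocks_conjTranspose, hx.1, he.1]
    simp
  · intro y
    have hy : y = Sum.elim (y ∘ Sum.inl) (y ∘ Sum.inr) := (Sum.elim_comp_inl_inr y).symm
    rw [PsiBlk, hy, Matrix.fromBlocks_mulVec]
    simp only [Matrix.zero_mulVec, add_zero, zero_add, Function.star_sumElim,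
      sumElim_dotProduct_sumElim]
    exact add_nonneg (hx.posSemidef.dotProduct_mulVec_nonneg _) (he.posSemidef.dotProduct_mulVec_nonneg _)

/-- Lemma 5 of the paper: the per-rule negative definiteness of
`Ξᵀ(∑ⱼ pᵢⱼ Ψⱼ)Ξ − Ψᵢ + EᵀSE + ΛᵀRΛ` implies the corresponding
fuzzy-combined (convex-weighted) inequality. -/
theorem stmt_3 (N T V n q : ℕ) (hN : 0 < N) (hT : 0 < T) (hV : 0 < V)
    (hn : 0 < n) (hq : 0 < q)
    (p : Fin N → Fin N → ℝ) (hp : ∀ i j, 0 ≤ p i j) (hp1 : ∀ i, ∑ j, p i j = 1)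
    (S : Matrix (Fin n) (Fin n) ℝ) (hS : S.PosDef)
    (R : Matrix (Fin q) (Fin q) ℝ) (hR : R.PosDef)
    (A : Fin N → Fin T → Matrix (Fin n) (Fin n) ℝ)
    (B : Fin N → Fin T → Matrix (Fin n) (Fin q) ℝ)
    (K C : Fin N → Fin V → Matrix (Fin q) (Fin n) ℝ)
    (Acal : Fin N → Fin V → Matrix (Fin n) (Fin n) ℝ)
    (Pxx Pee : Fin N → Fin V → Matrix (Fin n) (Fin n) ℝ)
    (hPxx : ∀ i υ, (Pxx i υ).PosDef) (hPee : ∀ i υ, (Pee i υ).PosDef)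
    (hLMI : ∀ (i : Fin N) (h : Fin T) (υ ω : Fin V),
      (-((XiBlk (A i h) (B i h) (K i υ) (C i υ) (Acal i υ))ᵀ *
            (∑ j, p i j • PsiBlk (Pxx j ω) (Pee j ω)) *
            XiBlk (A i h) (B i h) (K i υ) (C i υ) (Acal i υ)
          - PsiBlk (Pxx i υ) (Pee i υ)
          + (EBlk n)ᵀ * S * EBlk n
          + (LamBlk (K i υ) (C i υ))ᵀ * R * LamBlk (K i υ) (C i υ))).PosDef) :
    ∀ (i : Fin N) (θ : Fin T → ℝ) (ϑ μ : Fin V → ℝ),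
      (∀ h, 0 ≤ θ h) → ∑ h, θ h = 1 →
      (∀ υ, 0 ≤ ϑ υ) → ∑ υ, ϑ υ = 1 →
      (∀ ω, 0 ≤ μ ω) → ∑ ω, μ ω = 1 →
      (-((∑ h, ∑ υ, (θ h * ϑ υ) • XiBlk (A i h) (B i h) (K i υ) (C i υ) (Acal i υ))ᵀ *
            (∑ j, p i j • (∑ ω, μ ω • PsiBlk (Pxx j ω) (Pee j ω))) *
            (∑ h, ∑ υ, (θ h * ϑ υ) • XiBlk (A i h) (B i h) (K i υ) (C i υ) (Acal i υ))
          - (∑ υ, ϑ υ • PsiBlk (Pxx i υ) (Pee i υ))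
          + (EBlk n)ᵀ * S * EBlk n
          + (∑ υ, ϑ υ • LamBlk (K i υ) (C i υ))ᵀ * R *
              (∑ υ, ϑ υ • LamBlk (K i υ) (C i υ)))).PosDef := by
  intro i θ ϑ μ hθ hθ1 hϑ hϑ1 hμ hμ1
  -- abbreviations
  set Ξf : Fin T → Fin V → Matrix (Fin n ⊕ Fin n) (Fin n ⊕ Fin n) ℝ :=
    fun h υ => XiBlk (A i h) (B i h) (K i υ) (C i υ) (Acal i υ) with hΞf
  set Λf : Fin V → Matrix (Fin q) (Fin n ⊕ Fin n) ℝ :=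
    fun υ => LamBlk (K i υ) (C i υ) with hΛf
  set Ψf : Fin N → Fin V → Matrix (Fin n ⊕ Fin n) (Fin n ⊕ Fin n) ℝ :=
    fun j ω => PsiBlk (Pxx j ω) (Pee j ω) with hΨf
  set Qm : Fin V → Matrix (Fin n ⊕ Fin n) (Fin n ⊕ Fin n) ℝ :=
    fun ω => ∑ j, p i j • Ψf j ω with hQm
  have hΨpsd : ∀ j ω, (Ψf j ω).PosSemidef := fun j ω => myPsi_psd (hPxx j ω) (hPee j ω)
  have hQmpsd : ∀ ω, (Qm ω).PosSemidef := fun ω =>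
    myPsd_sum _ _ (fun j _ => myPsd_smul (hp i j) (hΨpsd j ω))
  have hQbar_eq : (∑ j, p i j • (∑ ω, μ ω • Ψf j ω)) = ∑ ω, μ ω • Qm ω := by
    simp only [hQm, Finset.smul_sum, smul_smul]
    rw [Finset.sum_comm]
    simp_rw [mul_comm]
  have hQbar_psd : (∑ j, p i j • (∑ ω, μ ω • Ψf j ω)).PosSemidef := by
    rw [hQbar_eq]
    exact myPsd_sum _ _ (fun ω _ => myPsd_smul (hμ ω) (hQmpsd ω))
  have hΨbar_psd : (∑ υ, ϑ υ • Ψf i υ).PosSemidef :=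
    myPsd_sum _ _ (fun υ _ => myPsd_smul (hϑ υ) (hΨpsd i υ))
  refine Matrix.PosDef.of_dotProduct_mulVec_pos ?_ ?_
  · -- Hermitian part
    have h1 : ((∑ h, ∑ υ, (θ h * ϑ υ) • Ξf h υ)ᵀ *
        (∑ j, p i j • (∑ ω, μ ω • Ψf j ω)) *
        (∑ h, ∑ υ, (θ h * ϑ υ) • Ξf h υ)).IsHermitian := by
      rw [show (∑ h, ∑ υ, (θ h * ϑ υ) • Ξf h υ)ᵀ
          = (∑ h, ∑ υ, (θ h * ϑ υ) • Ξf h υ)ᴴ from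
        (Matrix.conjTranspose_eq_transpose_of_trivial _).symm]
      exact Matrix.isHermitian_conjTranspose_mul_mul _ hQbar_psd.1
    have h3 : ((EBlk n)ᵀ * S * EBlk n).IsHermitian := by
      rw [show (EBlk n)ᵀ = (EBlk n)ᴴ from
        (Matrix.conjTranspose_eq_transpose_of_trivial _).symm]
      exact Matrix.isHermitian_conjTranspose_mul_mul _ hS.1
    have h4 : ((∑ υ, ϑ υ • Λf υ)ᵀ * R * (∑ υ, ϑ υ • Λf υ)).IsHermitian := by
      rw [show (∑ υ, ϑ υ • Λf υ)ᵀ = (∑ υ, ϑ υ • Λf υ)ᴴ from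
        (Matrix.conjTranspose_eq_transpose_of_trivial _).symm]
      exact Matrix.isHermitian_conjTranspose_mul_mul _ hR.1
    exact (((h1.sub hΨbar_psd.1).add h3).add h4).neg
  · -- Positivity part
    intro x hx
    have hstar : star x = x := by funext j; simp
    rw [hstar, Matrix.neg_mulVec, dotProduct_neg, neg_pos,
      Matrix.add_mulVec, Matrix.add_mulVec, Matrix.sub_mulVec,
      dotProduct_add, dotProduct_add, dotProduct_sub,
      myQf_transpose_mul_mul, myQf_transpose_mul_mul, myQf_transpose_mul_mul]
    -- weights over the pair index
    have hw2 : ∑ k : Fin T × Fin V, θ k.1 * ϑ k.2 = 1 := myWeight_prod_sum θ ϑ hθ1 hϑ1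
    have hw2nn : ∀ k : Fin T × Fin V, 0 ≤ θ k.1 * ϑ k.2 := fun k => mul_nonneg (hθ _) (hϑ _)
    -- reindexing the averaged closed-loop matrix applied to x
    have hXibar : (∑ h, ∑ υ, (θ h * ϑ υ) • XiBlk (A i h) (B i h) (K i υ) (C i υ) (Acal i υ)) *ᵥ x
        = ∑ k : Fin T × Fin V, (θ k.1 * ϑ k.2) • (XiBlk (A i k.1) (B i k.1) (K i k.2) (C i k.2) (Acal i k.2) *ᵥ x) := by
      rw [mySum_mulVec, Fintype.sum_prod_type]
      refine Finset.sum_congr rfl fun h _ => ?_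
      rw [mySum_mulVec]
      exact Finset.sum_congr rfl fun υ _ => Matrix.smul_mulVec _ _ _
    have hLambar : (∑ υ, ϑ υ • LamBlk (K i υ) (C i υ)) *ᵥ x = ∑ υ, ϑ υ • (LamBlk (K i υ) (C i υ) *ᵥ x) := by
      rw [mySum_mulVec]
      exact Finset.sum_congr rfl fun υ _ => Matrix.smul_mulVec _ _ _
    have hq2 : x ⬝ᵥ (∑ υ, ϑ υ • PsiBlk (Pxx i υ) (Pee i υ)) *ᵥ x
        = ∑ υ, ϑ υ * (x ⬝ᵥ PsiBlk (Pxx i υ) (Pee i υ) *ᵥ x) := by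
      rw [mySum_mulVec, myDotProduct_sum]
      refine Finset.sum_congr rfl fun υ _ => ?_
      rw [Matrix.smul_mulVec, dotProduct_smul, smul_eq_mul]
    rw [hXibar, hLambar, hq2]
    -- convexity bounds
    have hq1 := myConvex_qf hQbar_psd (fun k : Fin T × Fin V => θ k.1 * ϑ k.2) hw2nn hw2
      (fun k : Fin T × Fin V => XiBlk (A i k.1) (B i k.1) (K i k.2) (C i k.2) (Acal i k.2) *ᵥ x)
    have hq4 := myConvex_qf hR.posSemidef ϑ hϑ hϑ1
      (fun υ : Fin V => LamBlk (K i υ) (C i υ) *ᵥ x)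
    beta_reduce at hq1 hq4
    -- expanding Q̄ inside each per-pair quadratic form
    have hQexpand : ∀ y : Fin n ⊕ Fin n → ℝ, y ⬝ᵥ (∑ j, p i j • (∑ ω, μ ω • PsiBlk (Pxx j ω) (Pee j ω))) *ᵥ y
        = ∑ ω, μ ω * (y ⬝ᵥ (∑ j, p i j • PsiBlk (Pxx j ω) (Pee j ω)) *ᵥ y) := by
      intro y
      rw [hQbar_eq, mySum_mulVec, myDotProduct_sum]
      refine Finset.sum_congr rfl fun ω _ => ?_
      rw [Matrix.smul_mulVec, dotProduct_smul, smul_eq_mul]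
    have hSA : ∑ k : Fin T × Fin V, (θ k.1 * ϑ k.2) * ((XiBlk (A i k.1) (B i k.1) (K i k.2) (C i k.2) (Acal i k.2) *ᵥ x) ⬝ᵥ (∑ j, p i j • (∑ ω, μ ω • PsiBlk (Pxx j ω) (Pee j ω))) *ᵥ (XiBlk (A i k.1) (B i k.1) (K i k.2) (C i k.2) (Acal i k.2) *ᵥ x))
        = ∑ k : (Fin T × Fin V) × Fin V,
            ((θ k.1.1 * ϑ k.1.2) * μ k.2) * ((XiBlk (A i k.1.1) (B i k.1.1) (K i k.1.2) (C i k.1.2) (Acal i k.1.2) *ᵥ x) ⬝ᵥ (∑ j, p i j • PsiBlk (Pxx j k.2) (Pee j k.2)) *ᵥ (XiBlk (A i k.1.1) (B i k.1.1) (K i k.1.2) (C i k.1.2) (Acal i k.1.2) *ᵥ x)) := by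
      simp_rw [hQexpand]
      exact myProd_expand (fun k : Fin T × Fin V => θ k.1 * ϑ k.2) μ
        (fun k ω => (XiBlk (A i k.1) (B i k.1) (K i k.2) (C i k.2) (Acal i k.2) *ᵥ x) ⬝ᵥ (∑ j, p i j • PsiBlk (Pxx j ω) (Pee j ω)) *ᵥ (XiBlk (A i k.1) (B i k.1) (K i k.2) (C i k.2) (Acal i k.2) *ᵥ x))
    have hSB : ∑ k : (Fin T × Fin V) × Fin V, ((θ k.1.1 * ϑ k.1.2) * μ k.2) * (x ⬝ᵥ PsiBlk (Pxx i k.1.2) (Pee i k.1.2) *ᵥ x)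
        = ∑ υ, ϑ υ * (x ⬝ᵥ PsiBlk (Pxx i υ) (Pee i υ) *ᵥ x) :=
      (myCollapse_fst (fun k : Fin T × Fin V => θ k.1 * ϑ k.2) μ hμ1
        (fun k : Fin T × Fin V => (x ⬝ᵥ PsiBlk (Pxx i k.2) (Pee i k.2) *ᵥ x))).trans
      (myCollapse_snd θ ϑ hθ1 (fun υ => (x ⬝ᵥ PsiBlk (Pxx i υ) (Pee i υ) *ᵥ x)))
    have hSC : ∑ k : (Fin T × Fin V) × Fin V, ((θ k.1.1 * ϑ k.1.2) * μ k.2) * ((EBlk n *ᵥ x) ⬝ᵥ S *ᵥ (EBlk n *ᵥ x)) = ((EBlk n *ᵥ x) ⬝ᵥ S *ᵥ (EBlk n *ᵥ x)) := by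
      have h1 : ∑ k : (Fin T × Fin V) × Fin V, ((θ k.1.1 * ϑ k.1.2) * μ k.2) = 1 :=
        myWeight_prod_sum (fun k : Fin T × Fin V => θ k.1 * ϑ k.2) μ hw2 hμ1
      rw [← Finset.sum_mul, h1, one_mul]
    have hSD : ∑ k : (Fin T × Fin V) × Fin V, ((θ k.1.1 * ϑ k.1.2) * μ k.2) * ((LamBlk (K i k.1.2) (C i k.1.2) *ᵥ x) ⬝ᵥ R *ᵥ (LamBlk (K i k.1.2) (C i k.1.2) *ᵥ x))
        = ∑ υ, ϑ υ * ((LamBlk (K i υ) (C i υ) *ᵥ x) ⬝ᵥ R *ᵥ (LamBlk (K i υ) (C i υ) *ᵥ x)) :=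
      (myCollapse_fst (fun k : Fin T × Fin V => θ k.1 * ϑ k.2) μ hμ1
        (fun k : Fin T × Fin V => (LamBlk (K i k.2) (C i k.2) *ᵥ x) ⬝ᵥ R *ᵥ (LamBlk (K i k.2) (C i k.2) *ᵥ x))).trans
      (myCollapse_snd θ ϑ hθ1 (fun υ => (LamBlk (K i υ) (C i υ) *ᵥ x) ⬝ᵥ R *ᵥ (LamBlk (K i υ) (C i υ) *ᵥ x)))
    -- per-rule strict negativity
    have hg : ∀ k : (Fin T × Fin V) × Fin V,
        ((XiBlk (A i k.1.1) (B i k.1.1) (K i k.1.2) (C i k.1.2) (Acal i k.1.2) *ᵥ x) ⬝ᵥ (∑ j, p i j • PsiBlk (Pxx j k.2) (Pee j k.2)) *ᵥ (XiBlk (A i k.1.1) (B i k.1.1) (K i k.1.2) (C i k.1.2) (Acal i k.1.2) *ᵥ x))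
          - (x ⬝ᵥ PsiBlk (Pxx i k.1.2) (Pee i k.1.2) *ᵥ x) + ((EBlk n *ᵥ x) ⬝ᵥ S *ᵥ (EBlk n *ᵥ x)) + ((LamBlk (K i k.1.2) (C i k.1.2) *ᵥ x) ⬝ᵥ R *ᵥ (LamBlk (K i k.1.2) (C i k.1.2) *ᵥ x)) < 0 := by
      intro k
      have h0 := myPd_qf (hLMI i k.1.1 k.1.2 k.2) hx
      rw [Matrix.neg_mulVec, dotProduct_neg] at h0
      rw [Matrix.add_mulVec, Matrix.add_mulVec, Matrix.sub_mulVec,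
        dotProduct_add, dotProduct_add, dotProduct_sub,
        myQf_transpose_mul_mul, myQf_transpose_mul_mul, myQf_transpose_mul_mul] at h0
      linarith
    have hcomb : ∑ k : (Fin T × Fin V) × Fin V, ((θ k.1.1 * ϑ k.1.2) * μ k.2) *
        (((XiBlk (A i k.1.1) (B i k.1.1) (K i k.1.2) (C i k.1.2) (Acal i k.1.2) *ᵥ x) ⬝ᵥ (∑ j, p i j • PsiBlk (Pxx j k.2) (Pee j k.2)) *ᵥ (XiBlk (A i k.1.1) (B i k.1.1) (K i k.1.2) (C i k.1.2) (Acal i k.1.2) *ᵥ x))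
          - (x ⬝ᵥ PsiBlk (Pxx i k.1.2) (Pee i k.1.2) *ᵥ x) + ((EBlk n *ᵥ x) ⬝ᵥ S *ᵥ (EBlk n *ᵥ x)) + ((LamBlk (K i k.1.2) (C i k.1.2) *ᵥ x) ⬝ᵥ R *ᵥ (LamBlk (K i k.1.2) (C i k.1.2) *ᵥ x))) < 0 := by
      have := myNeg_combo (fun k : (Fin T × Fin V) × Fin V => ((θ k.1.1 * ϑ k.1.2) * μ k.2))
        (fun k : (Fin T × Fin V) × Fin V =>
          ((XiBlk (A i k.1.1) (B i k.1.1) (K i k.1.2) (C i k.1.2) (Acal i k.1.2) *ᵥ x) ⬝ᵥ (∑ j, p i j • PsiBlk (Pxx j k.2) (Pee j k.2)) *ᵥ (XiBlk (A i k.1.1) (B i k.1.1) (K i k.1.2) (C i k.1.2) (Acal i k.1.2) *ᵥ x))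
          - (x ⬝ᵥ PsiBlk (Pxx i k.1.2) (Pee i k.1.2) *ᵥ x) + ((EBlk n *ᵥ x) ⬝ᵥ S *ᵥ (EBlk n *ᵥ x)) + ((LamBlk (K i k.1.2) (C i k.1.2) *ᵥ x) ⬝ᵥ R *ᵥ (LamBlk (K i k.1.2) (C i k.1.2) *ᵥ x)))
        (fun k => mul_nonneg (mul_nonneg (hθ _) (hϑ _)) (hμ _))
        (myWeight_prod_sum (fun k : Fin T × Fin V => θ k.1 * ϑ k.2) μ hw2 hμ1) hg
      beta_reduce at this
      exact this
    have hsplit : ∑ k : (Fin T × Fin V) × Fin V, ((θ k.1.1 * ϑ k.1.2) * μ k.2) *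
        (((XiBlk (A i k.1.1) (B i k.1.1) (K i k.1.2) (C i k.1.2) (Acal i k.1.2) *ᵥ x) ⬝ᵥ (∑ j, p i j • PsiBlk (Pxx j k.2) (Pee j k.2)) *ᵥ (XiBlk (A i k.1.1) (B i k.1.1) (K i k.1.2) (C i k.1.2) (Acal i k.1.2) *ᵥ x))
          - (x ⬝ᵥ PsiBlk (Pxx i k.1.2) (Pee i k.1.2) *ᵥ x) + ((EBlk n *ᵥ x) ⬝ᵥ S *ᵥ (EBlk n *ᵥ x)) + ((LamBlk (K i k.1.2) (C i k.1.2) *ᵥ x) ⬝ᵥ R *ᵥ (LamBlk (K i k.1.2) (C i k.1.2) *ᵥ x)))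
        = (∑ k : (Fin T × Fin V) × Fin V,
            ((θ k.1.1 * ϑ k.1.2) * μ k.2) * ((XiBlk (A i k.1.1) (B i k.1.1) (K i k.1.2) (C i k.1.2) (Acal i k.1.2) *ᵥ x) ⬝ᵥ (∑ j, p i j • PsiBlk (Pxx j k.2) (Pee j k.2)) *ᵥ (XiBlk (A i k.1.1) (B i k.1.1) (K i k.1.2) (C i k.1.2) (Acal i k.1.2) *ᵥ x)))
          - (∑ k : (Fin T × Fin V) × Fin V, ((θ k.1.1 * ϑ k.1.2) * μ k.2) * (x ⬝ᵥ PsiBlk (Pxx i k.1.2) (Pee i k.1.2) *ᵥ x))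
          + (∑ k : (Fin T × Fin V) × Fin V, ((θ k.1.1 * ϑ k.1.2) * μ k.2) * ((EBlk n *ᵥ x) ⬝ᵥ S *ᵥ (EBlk n *ᵥ x)))
          + (∑ k : (Fin T × Fin V) × Fin V, ((θ k.1.1 * ϑ k.1.2) * μ k.2) * ((LamBlk (K i k.1.2) (C i k.1.2) *ᵥ x) ⬝ᵥ R *ᵥ (LamBlk (K i k.1.2) (C i k.1.2) *ᵥ x))) := by
      have h1 : ∑ k : (Fin T × Fin V) × Fin V, ((θ k.1.1 * ϑ k.1.2) * μ k.2) *
          (((XiBlk (A i k.1.1) (B i k.1.1) (K i k.1.2) (C i k.1.2) (Acal i k.1.2) *ᵥ x) ⬝ᵥ (∑ j, p i j • PsiBlk (Pxx j k.2) (Pee j k.2)) *ᵥ (XiBlk (A i k.1.1) (B i k.1.1) (K i k.1.2) (C i k.1.2) (Acal i k.1.2) *ᵥ x))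
            - (x ⬝ᵥ PsiBlk (Pxx i k.1.2) (Pee i k.1.2) *ᵥ x) + ((EBlk n *ᵥ x) ⬝ᵥ S *ᵥ (EBlk n *ᵥ x)) + ((LamBlk (K i k.1.2) (C i k.1.2) *ᵥ x) ⬝ᵥ R *ᵥ (LamBlk (K i k.1.2) (C i k.1.2) *ᵥ x)))
          = ∑ k : (Fin T × Fin V) × Fin V,
            (((θ k.1.1 * ϑ k.1.2) * μ k.2) * ((XiBlk (A i k.1.1) (B i k.1.1) (K i k.1.2) (C i k.1.2) (Acal i k.1.2) *ᵥ x) ⬝ᵥ (∑ j, p i j • PsiBlk (Pxx j k.2) (Pee j k.2)) *ᵥ (XiBlk (A i k.1.1) (B i k.1.1) (K i k.1.2) (C i k.1.2) (Acal i k.1.2) *ᵥ x))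
              - ((θ k.1.1 * ϑ k.1.2) * μ k.2) * (x ⬝ᵥ PsiBlk (Pxx i k.1.2) (Pee i k.1.2) *ᵥ x) + ((θ k.1.1 * ϑ k.1.2) * μ k.2) * ((EBlk n *ᵥ x) ⬝ᵥ S *ᵥ (EBlk n *ᵥ x)) + ((θ k.1.1 * ϑ k.1.2) * μ k.2) * ((LamBlk (K i k.1.2) (C i k.1.2) *ᵥ x) ⬝ᵥ R *ᵥ (LamBlk (K i k.1.2) (C i k.1.2) *ᵥ x))) :=
        Finset.sum_congr rfl fun k _ => by ring
      rw [h1, Finset.sum_add_distrib, Finset.sum_add_distrib, Finset.sum_sub_distrib]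
    linarith
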